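/- Let T' be a finite tree containing four distinct vertices v, b, w, a such that v–b–w is a path, w is adjacent to a, and in T' the degrees satisfy deg(v) = 1, deg(b) = 2, and deg(a) = 1. Let T be the tree obtained from T' by adding two new vertices u₁, u₂ with edges u₁u₂ and vu₁. Then γ₂(T) = γ₂(T') + 1 and α₂(T) = α₂(T') + 1; in particular α₂(T) − γ₂(T) = α₂(T') − γ₂(T'). -/

import Mathlib

open SimpleGraph

/-- `S` is a `k`-dominating set of the subgraph of `G` induced by `U`:
`S ⊆ U` and every vertex of `U` not in `S` has at least `k` neighbors in `S`. -/
def IsKDomOn {V : Type*} (G : SimpleGraph V) (k : ℕ) (U S : Set V) : Prop :=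
  S ⊆ U ∧ ∀ v ∈ U, v ∉ S → k ≤ (G.neighborSet v ∩ S).ncard

/-- `S` is a `k`-independent set of the subgraph of `G` induced by `U`:
`S ⊆ U` and every vertex of `S` has at most `k - 1` neighbors in `S`. -/
def IsKIndOn {V : Type*} (G : SimpleGraph V) (k : ℕ) (U S : Set V) : Prop :=
  S ⊆ U ∧ ∀ v ∈ S, (G.neighborSet v ∩ S).ncard ≤ k - 1

/-- The `k`-domination number of the subgraph of `G` induced by `U`. -/
noncomputable def gammaK {V : Type*} (G : SimpleGraph V) (k : ℕ) (U : Set V) : ℕ :=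
  sInf {n | ∃ S, IsKDomOn G k U S ∧ S.ncard = n}

/-- The `k`-independence number of the subgraph of `G` induced by `U`. -/
noncomputable def alphaK {V : Type*} (G : SimpleGraph V) (k : ℕ) (U : Set V) : ℕ :=
  sSup {n | ∃ S, IsKIndOn G k U S ∧ S.ncard = n}

set_option linter.unusedSectionVars false
set_option linter.unusedVariables false

section helpers
variable {V : Type*} [Fintype V] {G : SimpleGraph V} {k : ℕ} {S : Set V}

lemma gammaK_exists (G : SimpleGraph V) (k : ℕ) :
    ∃ S, IsKDomOn G k Set.univ S ∧ S.ncard = gammaK G k Set.univ := by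
  have hne : {n | ∃ S, IsKDomOn G k Set.univ S ∧ S.ncard = n}.Nonempty :=
    ⟨_, Set.univ, ⟨subset_rfl, fun v _ hv => absurd (Set.mem_univ v) hv⟩, rfl⟩
  exact Nat.sInf_mem hne

omit [Fintype V] in
lemma gammaK_le (h : IsKDomOn G k Set.univ S) : gammaK G k Set.univ ≤ S.ncard :=
  Nat.sInf_le ⟨S, h, rfl⟩

lemma bddAboveInd : BddAbove {n | ∃ S, IsKIndOn G k Set.univ S ∧ S.ncard = n} := by
  refine ⟨Fintype.card V, fun n hn => ?_⟩
  obtain ⟨S, _, rfl⟩ := hn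
  calc S.ncard ≤ (Set.univ : Set V).ncard := Set.ncard_le_ncard (Set.subset_univ S) Set.finite_univ
    _ = Fintype.card V := by simp [Set.ncard_univ, Nat.card_eq_fintype_card]

lemma alphaK_exists (G : SimpleGraph V) (k : ℕ) :
    ∃ S, IsKIndOn G k Set.univ S ∧ S.ncard = alphaK G k Set.univ := by
  have hne : {n | ∃ S, IsKIndOn G k Set.univ S ∧ S.ncard = n}.Nonempty :=
    ⟨0, ∅, ⟨Set.empty_subset _, fun v hv => absurd hv (Set.notMem_empty v)⟩, by simp⟩
  exact Nat.sSup_mem hne bddAboveInd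

lemma le_alphaK (h : IsKIndOn G k Set.univ S) : S.ncard ≤ alphaK G k Set.univ :=
  le_csSup bddAboveInd ⟨S, h, rfl⟩

end helpers



theorem stmt10 {V : Type*} [Fintype V] (T' : SimpleGraph V) (hT' : T'.IsTree)
    (v b w a : V) (hdist : ([v, b, w, a] : List V).Pairwise (· ≠ ·))
    (hvb : T'.Adj v b) (hbw : T'.Adj b w) (hwa : T'.Adj w a)
    (hdv : (T'.neighborSet v).ncard = 1) (hdb : (T'.neighborSet b).ncard = 2)
    (hda : (T'.neighborSet a).ncard = 1)
    (T : SimpleGraph (V ⊕ Fin 2))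
    (hadj : ∀ a b, T.Adj a b ↔
      ((∃ x y, T'.Adj x y ∧ a = Sum.inl x ∧ b = Sum.inl y) ∨
       (a = (Sum.inr 0 : V ⊕ Fin 2) ∧ b = Sum.inr 1) ∨ (a = Sum.inr 1 ∧ b = (Sum.inr 0 : V ⊕ Fin 2)) ∨
       (a = Sum.inl v ∧ b = (Sum.inr 0 : V ⊕ Fin 2)) ∨ (a = (Sum.inr 0 : V ⊕ Fin 2) ∧ b = Sum.inl v))) :
    gammaK T 2 Set.univ = gammaK T' 2 Set.univ + 1 ∧
    alphaK T 2 Set.univ = alphaK T' 2 Set.univ + 1 ∧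
    (alphaK T 2 Set.univ : ℤ) - (gammaK T 2 Set.univ : ℤ) =
      (alphaK T' 2 Set.univ : ℤ) - (gammaK T' 2 Set.univ : ℤ) := by
  simp only [List.pairwise_cons, List.mem_cons] at hdist
  obtain ⟨h1, h2, h3, -⟩ := hdist
  have hvb' : v ≠ b := h1 b (by simp)
  have hvw : v ≠ w := h1 w (by simp)
  have hva : v ≠ a := h1 a (by simp)
  have hbw' : b ≠ w := h2 w (by simp)
  have hba : b ≠ a := h2 a (by simp)
  have hwa' : w ≠ a := h3 a (by simp)
  set u1 : V ⊕ Fin 2 := Sum.inr 0 with hu1def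
  set u2 : V ⊕ Fin 2 := Sum.inr 1 with hu2def
  have h12 : u1 ≠ u2 := by simp [hu1def, hu2def]
  -- neighbor sets in T'
  have hNv : T'.neighborSet v = {b} := by
    refine (Set.eq_of_subset_of_ncard_le ?_ (by simp [hdv]) (Set.toFinite _)).symm
    simp [Set.singleton_subset_iff, hvb]
  have hNb : T'.neighborSet b = {v, w} := by
    refine (Set.eq_of_subset_of_ncard_le ?_ ?_ (Set.toFinite _)).symm
    · intro x hx
      rcases hx with h | h
      · exact h ▸ hvb.symm
      · exact h ▸ hbw
    · rw [hdb, Set.ncard_pair hvw]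
  have hNa : T'.neighborSet a = {w} := by
    refine (Set.eq_of_subset_of_ncard_le ?_ (by simp [hda]) (Set.toFinite _)).symm
    simp [Set.singleton_subset_iff, hwa.symm]
  -- adjacency characterizations in T
  have hadj_ll : ∀ x y, T.Adj (Sum.inl x) (Sum.inl y) ↔ T'.Adj x y := by
    intro x y
    rw [hadj]
    constructor
    · rintro (⟨x', y', h, hx, hy⟩ | ⟨h, -⟩ | ⟨h, -⟩ | ⟨-, h⟩ | ⟨h, -⟩) <;>
        simp_all
    · intro h
      exact Or.inl ⟨x, y, h, rfl, rfl⟩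
  have hN1 : T.neighborSet u1 = {u2, Sum.inl v} := by
    ext z
    rw [mem_neighborSet, hadj]
    rcases z with x | i
    · simp [hu1def, hu2def]
    · fin_cases i <;> simp [hu1def, hu2def]
  have hN2 : T.neighborSet u2 = {u1} := by
    ext z
    rw [mem_neighborSet, hadj]
    rcases z with x | i
    · simp [hu1def, hu2def]
    · fin_cases i <;> simp [hu1def, hu2def]
  have hNl : ∀ x, x ≠ v → T.neighborSet (Sum.inl x) = Sum.inl '' T'.neighborSet x := by
    intro x hx
    ext z
    rw [mem_neighborSet, hadj]
    rcases z with y | i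
    · simp [hadj_ll, hu1def, hu2def, Sum.inl.injEq, hx]
    · fin_cases i <;> simp [hu1def, hu2def, hx]
  have hNlv : T.neighborSet (Sum.inl v) = insert u1 (Sum.inl '' T'.neighborSet v) := by
    ext z
    rw [mem_neighborSet, hadj]
    rcases z with y | i
    · simp [hu1def, hu2def]
    · fin_cases i <;> simp [hu1def, hu2def]
  -- counting lemmas
  have hsum_ne : ∀ (x : V) (i : Fin 2), (Sum.inl x : V ⊕ Fin 2) ≠ Sum.inr i := by simp
  have hcount : ∀ (x : V) (S : Set (V ⊕ Fin 2)), x ≠ v →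
      (T.neighborSet (Sum.inl x) ∩ S).ncard = (T'.neighborSet x ∩ Sum.inl ⁻¹' S).ncard := by
    intro x S hx
    rw [hNl x hx, ← Set.image_inter_preimage,
      Set.ncard_image_of_injective _ Sum.inl_injective]
  have hcount_v : ∀ (S : Set (V ⊕ Fin 2)), u1 ∉ S →
      (T.neighborSet (Sum.inl v) ∩ S).ncard = (T'.neighborSet v ∩ Sum.inl ⁻¹' S).ncard := by
    intro S hS
    rw [hNlv, Set.insert_inter_of_notMem hS, ← Set.image_inter_preimage,
      Set.ncard_image_of_injective _ Sum.inl_injective]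
  have hcount_v_le : ∀ S : Set (V ⊕ Fin 2),
      (T'.neighborSet v ∩ Sum.inl ⁻¹' S).ncard ≤ (T.neighborSet (Sum.inl v) ∩ S).ncard := by
    intro S
    rw [← Set.ncard_image_of_injective _ Sum.inl_injective, Set.image_inter_preimage]
    refine Set.ncard_le_ncard (Set.inter_subset_inter_left _ ?_) (Set.toFinite _)
    rw [hNlv]; exact Set.subset_insert _ _
  -- γ part
  have hg1 : gammaK T 2 Set.univ ≤ gammaK T' 2 Set.univ + 1 := by
    obtain ⟨S', hS', hcard⟩ := gammaK_exists T' 2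
    have hvS' : v ∈ S' := by
      by_contra hv
      have h2le := hS'.2 v (Set.mem_univ v) hv
      rw [hNv] at h2le
      have hle : (({b} : Set V) ∩ S').ncard ≤ 1 := by
        refine le_trans (Set.ncard_le_ncard Set.inter_subset_left (Set.toFinite _)) (by simp)
      omega
    set S : Set (V ⊕ Fin 2) := insert u2 (Sum.inl '' S') with hSdef
    have hpre : Sum.inl ⁻¹' S = S' := by
      ext y
      simp [hSdef, hu2def, Sum.inl_injective.mem_set_image]
    have hScard : S.ncard = S'.ncard + 1 := by
      rw [Set.ncard_insert_of_notMem (by simp [hu2def]) (Set.toFinite _),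
        Set.ncard_image_of_injective _ Sum.inl_injective]
    have hSdom : IsKDomOn T 2 Set.univ S := by
      refine ⟨Set.subset_univ _, ?_⟩
      rintro (x | i) - hz
      · have hxS' : x ∉ S' := fun h => hz (Set.mem_insert_of_mem _ ⟨x, h, rfl⟩)
        have hxv : x ≠ v := fun h => hxS' (h ▸ hvS')
        rw [hcount x S hxv, hpre]
        exact hS'.2 x (Set.mem_univ x) hxS'
      · fin_cases i
        · have hsub : ({u2, Sum.inl v} : Set (V ⊕ Fin 2)) ⊆ T.neighborSet u1 ∩ S := by
            rw [hN1]
            refine Set.subset_inter subset_rfl ?_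
            rintro z (rfl | rfl)
            · exact Set.mem_insert _ _
            · exact Set.mem_insert_of_mem _ ⟨v, hvS', rfl⟩
          calc 2 = ({u2, Sum.inl v} : Set (V ⊕ Fin 2)).ncard :=
                (Set.ncard_pair (by simp [hu2def])).symm
            _ ≤ _ := Set.ncard_le_ncard hsub (Set.toFinite _)
        · exact absurd (Set.mem_insert u2 _) hz
    have := gammaK_le hSdom
    omega
  have hg2 : gammaK T' 2 Set.univ + 1 ≤ gammaK T 2 Set.univ := by
    obtain ⟨S, hS, hcard⟩ := gammaK_exists T 2
    have hu2S : u2 ∈ S := by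
      by_contra h
      have h2le := hS.2 u2 (Set.mem_univ _) h
      rw [hN2] at h2le
      have hle : (({u1} : Set (V ⊕ Fin 2)) ∩ S).ncard ≤ 1 :=
        le_trans (Set.ncard_le_ncard Set.inter_subset_left (Set.toFinite _)) (by simp)
      omega
    set A : Set V := Sum.inl ⁻¹' S with hAdef
    by_cases hu1S : u1 ∈ S
    · have hAcard : A.ncard + 2 ≤ S.ncard := by
        have hsub : insert u1 (insert u2 (Sum.inl '' A)) ⊆ S := by
          rintro z (rfl | rfl | ⟨x, hx, rfl⟩)
          exacts [hu1S, hu2S, hx]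
        have he1 : (insert u1 (insert u2 (Sum.inl '' A))).ncard
            = (insert u2 (Sum.inl '' A)).ncard + 1 := by
          rw [Set.ncard_insert_of_notMem (by simp [hu1def, hu2def])
            (Set.toFinite _)]
        have he2 : (insert u2 (Sum.inl '' A)).ncard = A.ncard + 1 := by
          rw [Set.ncard_insert_of_notMem (by simp [hu2def]) (Set.toFinite _),
            Set.ncard_image_of_injective _ Sum.inl_injective]
        have := Set.ncard_le_ncard hsub (Set.toFinite _)
        omega
      have hdom : IsKDomOn T' 2 Set.univ (insert v A) := by
        refine ⟨Set.subset_univ _, fun x _ hx => ?_⟩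
        have hxv : x ≠ v := fun h => hx (h ▸ Set.mem_insert _ _)
        have hxA : Sum.inl x ∉ S := fun h => hx (Set.mem_insert_of_mem _ h)
        have h2le := hS.2 (Sum.inl x) (Set.mem_univ _) hxA
        rw [hcount x S hxv] at h2le
        calc 2 ≤ (T'.neighborSet x ∩ A).ncard := h2le
          _ ≤ (T'.neighborSet x ∩ insert v A).ncard :=
            Set.ncard_le_ncard (Set.inter_subset_inter_right _ (Set.subset_insert _ _))
              (Set.toFinite _)
      have hle := gammaK_le hdom
      have hins : (insert v A).ncard ≤ A.ncard + 1 := Set.ncard_insert_le _ _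
      omega
    · have hvA : v ∈ A := by
        by_contra h
        have h2le := hS.2 u1 (Set.mem_univ _) hu1S
        rw [hN1] at h2le
        have hsub : ({u2, Sum.inl v} : Set (V ⊕ Fin 2)) ∩ S ⊆ {u2} := by
          rintro z ⟨(rfl | rfl), hz⟩
          · exact rfl
          · exact absurd hz h
        have hle : (({u2, Sum.inl v} : Set (V ⊕ Fin 2)) ∩ S).ncard ≤ 1 := by
          simpa using Set.ncard_le_ncard hsub (Set.toFinite _)
        omega
      have hAcard : A.ncard + 1 ≤ S.ncard := by
        have hsub : insert u2 (Sum.inl '' A) ⊆ S := by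
          rintro z (rfl | ⟨x, hx, rfl⟩)
          exacts [hu2S, hx]
        have he2 : (insert u2 (Sum.inl '' A)).ncard = A.ncard + 1 := by
          rw [Set.ncard_insert_of_notMem (by simp [hu2def]) (Set.toFinite _),
            Set.ncard_image_of_injective _ Sum.inl_injective]
        have := Set.ncard_le_ncard hsub (Set.toFinite _)
        omega
      have hdom : IsKDomOn T' 2 Set.univ A := by
        refine ⟨Set.subset_univ _, fun x _ hx => ?_⟩
        have hxv : x ≠ v := fun h => hx (h ▸ hvA)
        have h2le := hS.2 (Sum.inl x) (Set.mem_univ _) hx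
        rw [hcount x S hxv] at h2le
        exact h2le
      have hle := gammaK_le hdom
      omega
  -- helper: neighbors of v and a
  have hvnb : ∀ x : V, v ∈ T'.neighborSet x → x = b := by
    intro x hx
    have : x ∈ T'.neighborSet v := (T'.adj_comm x v).mp hx
    rw [hNv] at this
    exact this
  have hanb : ∀ x : V, a ∈ T'.neighborSet x → x = w := by
    intro x hx
    have : x ∈ T'.neighborSet a := (T'.adj_comm x a).mp hx
    rw [hNa] at this
    exact this
  -- preimage of a 2-independent set is 2-independent
  have hAind : ∀ S : Set (V ⊕ Fin 2), IsKIndOn T 2 Set.univ S →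
      IsKIndOn T' 2 Set.univ (Sum.inl ⁻¹' S) := by
    intro S hS
    refine ⟨Set.subset_univ _, fun x hx => ?_⟩
    by_cases hxv : x = v
    · subst hxv
      exact le_trans (hcount_v_le S) (hS.2 _ hx)
    · rw [← hcount x S hxv]
      exact hS.2 _ hx
  have ha1 : alphaK T' 2 Set.univ + 1 ≤ alphaK T 2 Set.univ := by
    obtain ⟨S', hS', hcard⟩ := alphaK_exists T' 2
    set S : Set (V ⊕ Fin 2) := insert u2 (Sum.inl '' S') with hSdef
    have hu1nS : u1 ∉ S := by simp [hSdef, hu1def, hu2def]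
    have hpre : Sum.inl ⁻¹' S = S' := by
      ext y
      simp [hSdef, hu2def, Sum.inl_injective.mem_set_image]
    have hScard : S.ncard = S'.ncard + 1 := by
      rw [Set.ncard_insert_of_notMem (by simp [hu2def]) (Set.toFinite _),
        Set.ncard_image_of_injective _ Sum.inl_injective]
    have hind : IsKIndOn T 2 Set.univ S := by
      refine ⟨Set.subset_univ _, ?_⟩
      rintro (x | i) hz
      · have hxS' : x ∈ S' := by
          rcases hz with hz | ⟨y, hy, hyx⟩
          · exact absurd hz (by simp [hu2def])
          · exact (Sum.inl_injective hyx) ▸ hy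
        by_cases hxv : x = v
        · rw [hxv, hcount_v S hu1nS, hpre]
          exact hS'.2 v (hxv ▸ hxS')
        · rw [hcount x S hxv, hpre]
          exact hS'.2 x hxS'
      · fin_cases i
        · exact absurd hz hu1nS
        · show (T.neighborSet u2 ∩ S).ncard ≤ 2 - 1
          rw [hN2]
          have hsub : ({u1} : Set (V ⊕ Fin 2)) ∩ S ⊆ {u1} := Set.inter_subset_left
          simpa using Set.ncard_le_ncard hsub (Set.toFinite _)
    have := le_alphaK hind
    omega
  have ha2 : alphaK T 2 Set.univ ≤ alphaK T' 2 Set.univ + 1 := by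
    obtain ⟨S, hS, hcard⟩ := alphaK_exists T 2
    set A : Set V := Sum.inl ⁻¹' S with hAdef
    have hA : IsKIndOn T' 2 Set.univ A := hAind S hS
    have hAle := le_alphaK hA
    by_cases hboth : u1 ∈ S ∧ u2 ∈ S
    · -- both pendant vertices in S
      have hvnS : Sum.inl v ∉ S := by
        intro hvS
        have hle := hS.2 u1 hboth.1
        have hsub : ({u2, Sum.inl v} : Set (V ⊕ Fin 2)) ⊆ T.neighborSet u1 ∩ S := by
          rw [hN1]
          exact Set.subset_inter subset_rfl (by rintro z (rfl | rfl) <;> [exact hboth.2; exact hvS])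
        have h2le : 2 ≤ (T.neighborSet u1 ∩ S).ncard := by
          calc 2 = ({u2, Sum.inl v} : Set (V ⊕ Fin 2)).ncard :=
                (Set.ncard_pair (by simp [hu2def])).symm
            _ ≤ _ := Set.ncard_le_ncard hsub (Set.toFinite _)
        omega
      have hvA : v ∉ A := hvnS
      have hScard : S.ncard ≤ A.ncard + 2 := by
        have hsub : S ⊆ (Sum.inl '' A) ∪ {u1, u2} := by
          rintro (x | i) hz
          · exact Or.inl ⟨x, hz, rfl⟩
          · right; fin_cases i <;> simp [hu1def, hu2def]
        calc S.ncard ≤ ((Sum.inl '' A) ∪ {u1, u2}).ncard :=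
              Set.ncard_le_ncard hsub (Set.toFinite _)
          _ ≤ (Sum.inl '' A).ncard + ({u1, u2} : Set (V ⊕ Fin 2)).ncard := Set.ncard_union_le _ _
          _ ≤ A.ncard + 2 := by
              rw [Set.ncard_image_of_injective _ Sum.inl_injective, Set.ncard_pair h12]
        -- end calc
      by_cases hbw2 : b ∈ A ∧ w ∈ A
      · -- S₂ := insert v (insert a (A \ {b}))
        have haA : a ∉ A := by
          intro haA
          have hle := hA.2 w hbw2.2
          have hsub : ({b, a} : Set V) ⊆ T'.neighborSet w ∩ A := by
            rw [Set.insert_subset_iff, Set.singleton_subset_iff]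
            exact ⟨⟨hbw.symm, hbw2.1⟩, hwa, haA⟩
          have h2le : 2 ≤ (T'.neighborSet w ∩ A).ncard := by
            calc 2 = ({b, a} : Set V).ncard := (Set.ncard_pair hba).symm
              _ ≤ _ := Set.ncard_le_ncard hsub (Set.toFinite _)
          omega
        set S₂ : Set V := insert v (insert a (A \ {b})) with hS2def
        have hvS2 : v ∉ insert a (A \ {b}) := by
          simp only [Set.mem_insert_iff, Set.mem_diff]
          push_neg
          exact ⟨hva, fun hv => absurd hv hvA⟩
        have haS2 : a ∉ A \ {b} := fun h => haA h.1
        have hcard2 : S₂.ncard = A.ncard + 1 := by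
          have hbA1 : 0 < A.ncard := (Set.ncard_pos (Set.toFinite _)).mpr ⟨b, hbw2.1⟩
          rw [hS2def, Set.ncard_insert_of_notMem hvS2 (Set.toFinite _),
            Set.ncard_insert_of_notMem haS2 (Set.toFinite _),
            Set.ncard_diff_singleton_of_mem hbw2.1]
          omega
        have hNwA : T'.neighborSet w ∩ A = {b} := by
          refine (Set.eq_of_subset_of_ncard_le ?_ ?_ (Set.toFinite _)).symm
          · exact Set.singleton_subset_iff.mpr ⟨hbw.symm, hbw2.1⟩
          · simpa using hA.2 w hbw2.2
        have hbS2 : b ∉ S₂ := by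
          simp only [hS2def, Set.mem_insert_iff, Set.mem_diff]
          push_neg
          exact ⟨hvb'.symm, hba, fun _ => rfl⟩
        have hind2 : IsKIndOn T' 2 Set.univ S₂ := by
          refine ⟨Set.subset_univ _, ?_⟩
          intro x hx
          show (T'.neighborSet x ∩ S₂).ncard ≤ 2 - 1
          rcases hx with rfl | rfl | ⟨hxA, hxb⟩
          · -- x = v
            have hsub : T'.neighborSet x ∩ S₂ ⊆ {b} := by
              rw [hNv]; exact Set.inter_subset_left
            simpa using Set.ncard_le_ncard hsub (Set.toFinite _)
          · -- x = a
            have hsub : T'.neighborSet x ∩ S₂ ⊆ {w} := by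
              rw [hNa]; exact Set.inter_subset_left
            simpa using Set.ncard_le_ncard hsub (Set.toFinite _)
          · simp only [Set.mem_singleton_iff] at hxb
            by_cases hxw : x = w
            · subst hxw
              have hsub : T'.neighborSet x ∩ S₂ ⊆ {a} := by
                rintro z ⟨hz1, hz2⟩
                rcases hz2 with rfl | rfl | ⟨hz3, hz4⟩
                · exact absurd (hvnb x hz1) hxb
                · rfl
                · have : z ∈ T'.neighborSet x ∩ A := ⟨hz1, hz3⟩
                  rw [hNwA] at this
                  exact absurd this hz4
              simpa using Set.ncard_le_ncard hsub (Set.toFinite _)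
            · have hsub : T'.neighborSet x ∩ S₂ ⊆ T'.neighborSet x ∩ A := by
                rintro z ⟨hz1, hz2⟩
                rcases hz2 with rfl | rfl | ⟨hz3, -⟩
                · exact absurd (hvnb x hz1) hxb
                · exact absurd (hanb x hz1) hxw
                · exact ⟨hz1, hz3⟩
              exact le_trans (Set.ncard_le_ncard hsub (Set.toFinite _)) (hA.2 x hxA)
        have := le_alphaK hind2
        omega
      · -- S₂ := insert v A
        have hcard2 : (insert v A).ncard = A.ncard + 1 :=
          Set.ncard_insert_of_notMem hvA (Set.toFinite _)
        have hind2 : IsKIndOn T' 2 Set.univ (insert v A) := by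
          refine ⟨Set.subset_univ _, ?_⟩
          rintro x (rfl | hxA)
          · show (T'.neighborSet x ∩ insert x A).ncard ≤ 2 - 1
            rw [hNv]
            have hsub : ({b} : Set V) ∩ insert x A ⊆ {b} := Set.inter_subset_left
            simpa using Set.ncard_le_ncard hsub (Set.toFinite _)
          · by_cases hxb : x = b
            · subst hxb
              have hwA : w ∉ A := fun hw => hbw2 ⟨hxA, hw⟩
              have hsub : T'.neighborSet x ∩ insert v A ⊆ {v} := by
                rw [hNb]
                rintro z ⟨(rfl | rfl), hz2⟩
                · exact rfl
                · rcases hz2 with rfl | hz3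
                  · exact absurd rfl hvw.symm
                  · exact absurd hz3 hwA
              show (T'.neighborSet x ∩ insert v A).ncard ≤ 2 - 1
              simpa using Set.ncard_le_ncard hsub (Set.toFinite _)
            · have hsub : T'.neighborSet x ∩ insert v A ⊆ T'.neighborSet x ∩ A := by
                rintro z ⟨hz1, (rfl | hz2)⟩
                · exact absurd (hvnb x hz1) hxb
                · exact ⟨hz1, hz2⟩
              exact le_trans (Set.ncard_le_ncard hsub (Set.toFinite _)) (hA.2 x hxA)
        have := le_alphaK hind2
        omega
    · -- at most one pendant vertex in S
      have hScard : S.ncard ≤ A.ncard + 1 := by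
        rcases not_and_or.mp hboth with h1S | h2S
        · have hsub : S ⊆ (Sum.inl '' A) ∪ {u2} := by
            rintro (x | i) hz
            · exact Or.inl ⟨x, hz, rfl⟩
            · right
              fin_cases i
              · exact absurd hz h1S
              · rfl
          calc S.ncard ≤ ((Sum.inl '' A) ∪ {u2}).ncard :=
                Set.ncard_le_ncard hsub (Set.toFinite _)
            _ ≤ (Sum.inl '' A).ncard + ({u2} : Set (V ⊕ Fin 2)).ncard := Set.ncard_union_le _ _
            _ ≤ A.ncard + 1 := by
                rw [Set.ncard_image_of_injective _ Sum.inl_injective, Set.ncard_singleton]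
        · have hsub : S ⊆ (Sum.inl '' A) ∪ {u1} := by
            rintro (x | i) hz
            · exact Or.inl ⟨x, hz, rfl⟩
            · right
              fin_cases i
              · rfl
              · exact absurd hz h2S
          calc S.ncard ≤ ((Sum.inl '' A) ∪ {u1}).ncard :=
                Set.ncard_le_ncard hsub (Set.toFinite _)
            _ ≤ (Sum.inl '' A).ncard + ({u1} : Set (V ⊕ Fin 2)).ncard := Set.ncard_union_le _ _
            _ ≤ A.ncard + 1 := by
                rw [Set.ncard_image_of_injective _ Sum.inl_injective, Set.ncard_singleton]
      omega
  refine ⟨le_antisymm hg1 hg2, le_antisymm ha2 ha1, ?_⟩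
  have e1 : gammaK T 2 Set.univ = gammaK T' 2 Set.univ + 1 := le_antisymm hg1 hg2
  have e2 : alphaK T 2 Set.univ = alphaK T' 2 Set.univ + 1 := le_antisymm ha2 ha1
  rw [e1, e2]
  push_cast
  ring
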